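/- Let f be a time-varying vector field on E = EuclideanSpace ℝ (Fin n) such that f(·,t) is globally Lipschitz with constant L > 0 for every t, and let φ be a flow for f defined on all of E. Assume that for each t ≥ t₀ the map z ↦ φ(t;t₀,z) is differentiable at x with Fréchet derivative Dφ(t;t₀,x). Then for every v ∈ E and every t ≥ t₀: ‖Dφ(t;t₀,x) v‖ ≥ e^{−L(t−t₀)} ‖v‖. -/

import Mathlib

noncomputable section

/-- The Euclidean state space. -/
abbrev E (n : ℕ) := EuclideanSpace ℝ (Fin n)

/-- `x` is a solution of `ẋ = f(x,t)` starting at `(t₀, x₀)`. -/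
def IsSolution {n : ℕ} (f : E n → ℝ → E n) (t₀ : ℝ) (x₀ : E n) (x : ℝ → E n) : Prop :=
  x t₀ = x₀ ∧ ∀ t, t₀ ≤ t → HasDerivAt x (f (x t) t) t

/-- `φ` is a flow for `f`: `φ t₀ t₀ x = x` and `t ↦ φ t t₀ x` solves `ẋ = f(x,t)`. -/
def IsFlow {n : ℕ} (f : E n → ℝ → E n) (φ : ℝ → ℝ → E n → E n) : Prop :=
  ∀ t₀ x, IsSolution f t₀ x (fun t => φ t t₀ x)

/-- Backward Grönwall: the flow can contract at most exponentially. -/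
lemma flow_dist_lower {n : ℕ} (f : E n → ℝ → E n) (L : ℝ)
    (hf : ∀ (t : ℝ) (p q : E n), ‖f p t - f q t‖ ≤ L * ‖p - q‖)
    (φ : ℝ → ℝ → E n → E n) (hφ : IsFlow f φ) (t₀ : ℝ) (x y : E n) (t : ℝ) (ht : t₀ ≤ t) :
    ‖x - y‖ ≤ Real.exp (L * (t - t₀)) * ‖φ t t₀ x - φ t t₀ y‖ := by
  set d : ℝ → E n := fun τ => φ τ t₀ x - φ τ t₀ y with hd
  have hd' : ∀ τ, t₀ ≤ τ → HasDerivAt d (f (φ τ t₀ x) τ - f (φ τ t₀ y) τ) τ := fun τ hτ =>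
    ((hφ t₀ x).2 τ hτ).sub ((hφ t₀ y).2 τ hτ)
  set w : ℝ → E n := fun s => d (t₀ + t - s) with hw
  have hw' : ∀ s ≤ t, HasDerivAt w
      (-(f (φ (t₀ + t - s) t₀ x) (t₀ + t - s) - f (φ (t₀ + t - s) t₀ y) (t₀ + t - s))) s := by
    intro s hs
    have h1 : HasDerivAt (fun s : ℝ => t₀ + t - s) (-1) s := by
      simpa using ((hasDerivAt_id s).const_sub (t₀ + t))
    have := HasDerivAt.scomp (h := fun s : ℝ => t₀ + t - s)
      (g₁ := d) (x := s) (hd' (t₀ + t - s) (by linarith)) h1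
    simpa [neg_one_smul, Function.comp_def] using this
  have key : ∀ s ∈ Set.Icc t₀ t, ‖w s‖ ≤ gronwallBound ‖w t₀‖ L 0 (s - t₀) := by
    apply norm_le_gronwallBound_of_norm_deriv_right_le
    · intro s hs
      exact (hw' s hs.2).continuousAt.continuousWithinAt
    · intro s hs
      exact (hw' s hs.2.le).hasDerivWithinAt
    · exact le_refl _
    · intro s hs
      rw [norm_neg, add_zero]
      exact hf _ _ _
  have hx : φ t₀ t₀ x = x := (hφ t₀ x).1
  have hy : φ t₀ t₀ y = y := (hφ t₀ y).1
  have h2 := key t ⟨ht, le_refl t⟩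
  rw [gronwallBound_ε0] at h2
  simp only [hw, hd, add_sub_cancel_right, add_sub_cancel_left, hx, hy] at h2
  exact h2.trans (le_of_eq (by ring))

/-- If `f(·,t)` is globally Lipschitz with constant `L` and the flow map `z ↦ φ(t;t₀,z)`
is differentiable at `x` with Fréchet derivative `Dφ(t;t₀,x)`, then
`‖Dφ(t;t₀,x) v‖ ≥ e^{−L(t−t₀)} ‖v‖` for all `v` and `t ≥ t₀`. -/
theorem flow_deriv_lower_bound {n : ℕ} (f : E n → ℝ → E n) (L : ℝ) (hL : 0 < L)
    (hf : ∀ (t : ℝ) (p q : E n), ‖f p t - f q t‖ ≤ L * ‖p - q‖)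
    (φ : ℝ → ℝ → E n → E n) (hφ : IsFlow f φ)
    (t₀ : ℝ) (x : E n) (Dφ : ℝ → (E n →L[ℝ] E n))
    (hDφ : ∀ t, t₀ ≤ t → HasFDerivAt (fun z => φ t t₀ z) (Dφ t) x) :
    ∀ (v : E n) (t : ℝ), t₀ ≤ t →
      Real.exp (-L * (t - t₀)) * ‖v‖ ≤ ‖Dφ t v‖ := by
  intro v t ht
  set ψ : ℝ → E n := fun s => φ t t₀ (x + s • v) with hψ
  have hline : HasDerivAt (fun s : ℝ => x + s • v) v 0 := by
    simpa using ((hasDerivAt_id (0:ℝ)).smul_const v).const_add x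
  have hfd : HasFDerivAt (fun z => φ t t₀ z) (Dφ t) ((fun s : ℝ => x + s • v) 0) := by
    simpa using hDφ t ht
  have hder : HasDerivAt ψ (Dφ t v) 0 := by
    simpa [Function.comp_def] using hfd.comp_hasDerivAt 0 hline
  have hslope := hasDerivAt_iff_tendsto_slope.mp hder
  have hbound : ∀ s ∈ ({(0:ℝ)}ᶜ : Set ℝ), Real.exp (-L * (t - t₀)) * ‖v‖ ≤ ‖slope ψ 0 s‖ := by
    intro s hs
    have hs0 : s ≠ 0 := hs
    have habs : (0:ℝ) < |s| := abs_pos.mpr hs0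
    have h1 := flow_dist_lower f L hf φ hφ t₀ (x + s • v) x t ht
    have h1' : |s| * ‖v‖ ≤ Real.exp (L * (t - t₀)) * ‖ψ s - ψ 0‖ := by
      have h2 : (x + s • v) - x = s • v := by abel
      have h3 : ψ s - ψ 0 = φ t t₀ (x + s • v) - φ t t₀ x := by simp [hψ]
      rw [h2, h3.symm] at h1
      simpa [norm_smul, Real.norm_eq_abs] using h1
    have key2 : Real.exp (-L * (t - t₀)) * ‖v‖ * |s| ≤ ‖ψ s - ψ 0‖ := by
      calc Real.exp (-L * (t - t₀)) * ‖v‖ * |s|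
          = Real.exp (-L * (t - t₀)) * (|s| * ‖v‖) := by ring
        _ ≤ Real.exp (-L * (t - t₀)) * (Real.exp (L * (t - t₀)) * ‖ψ s - ψ 0‖) :=
            mul_le_mul_of_nonneg_left h1' (Real.exp_nonneg _)
        _ = ‖ψ s - ψ 0‖ := by rw [← mul_assoc, ← Real.exp_add]; ring_nf; simp
    have h4 : ‖slope ψ 0 s‖ = |s|⁻¹ * ‖ψ s - ψ 0‖ := by
      simp [slope, vsub_eq_sub, norm_smul, Real.norm_eq_abs, abs_inv]
    rw [h4, inv_mul_eq_div, le_div_iff₀ habs]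
    exact key2
  have hev : ∀ᶠ s in nhdsWithin 0 {(0:ℝ)}ᶜ, Real.exp (-L * (t - t₀)) * ‖v‖ ≤ ‖slope ψ 0 s‖ :=
    eventually_mem_nhdsWithin.mono fun s hs => hbound s hs
  exact ge_of_tendsto hslope.norm hev
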